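/- Fix a connected graph G with n ≥ 2 vertices and m ≥ 1 edges, a cycle basis ρ_1, …, ρ_c (c = m − n + 1), and an integer B ≥ 2. For p chosen uniformly at random from the configurations {1, …, B}^n, the probability that there exist a noise vector ε ∈ {−1,0,1}^m and a vector x̂ ∈ Lat(ℓ(p) + ε) with ‖x̂‖₂ ≤ (2m)^{1/2}·2^{m/2} such that x̂ is not in the real linear span of the vectors ŵ_{ρ_1}, …, ŵ_{ρ_c} (formed with respect to σ_p and ε), is at most (3·(2m)^{1/2}·2^{m/2})^{m+1} · 3^m · 2^n · n! / B. -/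

import Mathlib

open scoped BigOperators

/-- A graph on `Fin n` with `m` edges is given by the endpoint map `ends`.
An *orientation* `σ` assigns to each edge either its reference pair or the swapped pair. -/
def IsOrientation {n m : ℕ} (ends σ : Fin m → Fin n × Fin n) : Prop :=
  ∀ e, σ e = ends e ∨ σ e = ((ends e).2, (ends e).1)

/-- The graph is simple: no loops and no parallel edges. -/
def IsSimple {n m : ℕ} (ends : Fin m → Fin n × Fin n) : Prop :=
  (∀ e, (ends e).1 ≠ (ends e).2) ∧
    ∀ e e', (ends e = ends e' ∨ ends e = ((ends e').2, (ends e').1)) → e = e'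

/-- The graph is connected. -/
def IsConn {n m : ℕ} (ends : Fin m → Fin n × Fin n) : Prop :=
  ∀ a b : Fin n,
    Relation.ReflTransGen (fun u v => ∃ e, ends e = (u, v) ∨ ends e = (v, u)) a b

/-- The configuration orientation `σ_p`: edge `{i,j}` is oriented `(i,j)` if `p i < p j`,
and `(j,i)` otherwise. -/
def configOrient {n m : ℕ} (ends : Fin m → Fin n × Fin n) {α : Type*} [LinearOrder α]
    (p : Fin n → α) : Fin m → Fin n × Fin n :=
  fun e => if p (ends e).1 < p (ends e).2 then ends e else ((ends e).2, (ends e).1)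

/-- The oriented measurement map `ℓ_σ`: the entry for an edge oriented `(i,j)` is `p j - p i`. -/
def omeas {n m : ℕ} (σ : Fin m → Fin n × Fin n) {R : Type*} [Ring R] (p : Fin n → R) :
    Fin m → R :=
  fun e => p (σ e).2 - p (σ e).1

/-- The measurement map `ℓ`: the entry for edge `{i,j}` is `|p j - p i|`. -/
def meas {n m : ℕ} (ends : Fin m → Fin n × Fin n) {R : Type*} [Ring R] [LinearOrder R]
    [IsStrictOrderedRing R]
    (p : Fin n → R) : Fin m → R :=
  fun e => |p (ends e).2 - p (ends e).1|

/-- The signed edge incidence matrix `M^σ(G)`: the row of an edge oriented `(i,j)` has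
entry `-1` in column `i`, `+1` in column `j`, and `0` elsewhere. -/
def inc {n m : ℕ} (σ : Fin m → Fin n × Fin n) : Matrix (Fin m) (Fin n) ℝ :=
  Matrix.of fun e u => if u = (σ e).2 then 1 else if u = (σ e).1 then -1 else 0

/-- A simple cycle in the graph `ends`: a cyclic sequence of `k ≥ 3` distinct vertices,
consecutive ones joined by distinct edges of the graph. -/
structure SimpleCycle {n m : ℕ} (ends : Fin m → Fin n × Fin n) where
  k : ℕ
  hk : 3 ≤ k
  v : ZMod k → Fin n
  hv : Function.Injective v
  edge : ZMod k → Fin m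
  hedge : Function.Injective edge
  hends : ∀ i : ZMod k,
    ends (edge i) = (v i, v (i + 1)) ∨ ends (edge i) = (v (i + 1), v i)

open Classical in
/-- The signed cycle vector `w_{ρ,σ}` of a simple cycle `ρ` with respect to an
orientation `σ`: `0` off the cycle, `+1` on edges whose `σ`-orientation agrees with
the traversal, `-1` on those that disagree. -/
noncomputable def cycVec {n m : ℕ} {ends : Fin m → Fin n × Fin n} (ρ : SimpleCycle ends)
    (σ : Fin m → Fin n × Fin n) : Fin m → ℤ := fun e =>
  if h : ∃ i, ρ.edge i = e then
    (if σ e = (ρ.v h.choose, ρ.v (h.choose + 1)) then 1 else -1)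
  else 0

/-- The `e`-th column of the `(m+1) × m` matrix `[I_m ; rᵀ]`. -/
def latCol {m : ℕ} (r : Fin m → ℤ) (e : Fin m) : Fin (m + 1) → ℤ :=
  Fin.snoc (fun e' => if e' = e then 1 else 0) (r e)

/-- The lattice `LatZ(r) ⊆ ℤ^{m+1}`: integer span of the columns of `[I_m ; rᵀ]`. -/
def LatZ {m : ℕ} (r : Fin m → ℤ) : Submodule ℤ (Fin (m + 1) → ℤ) :=
  Submodule.span ℤ (Set.range (latCol r))

/-- The Euclidean norm of an integer vector. -/
noncomputable def norm2 {d : ℕ} (y : Fin d → ℤ) : ℝ :=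
  Real.sqrt (∑ j, ((y j : ℝ)) ^ 2)

/-- The hatted cycle vector `ŵ_{ρ,σ} = [w_{ρ,σ} ; εᵀ w_{ρ,σ}]`. -/
noncomputable def hatCycVec {n m : ℕ} {ends : Fin m → Fin n × Fin n} (ρ : SimpleCycle ends)
    (σ : Fin m → Fin n × Fin n) (ε : Fin m → ℤ) : Fin (m + 1) → ℤ :=
  Fin.snoc (cycVec ρ σ) (∑ e, ε e * cycVec ρ σ e)

/-- A vector with all entries in `{-1, 0, 1}`. -/
def SmallVec {m : ℕ} (ε : Fin m → ℤ) : Prop := ∀ e, ε e = -1 ∨ ε e = 0 ∨ ε e = 1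

/-- Cast an integer vector to a real vector. -/
def castR {d : ℕ} (y : Fin d → ℤ) : Fin d → ℝ := fun j => (y j : ℝ)

/-- `r` is *bad* with `(σ, x̂)` (relative to the cycle basis `ρs` and noise `ε`):
`x̂` is linearly independent of the hatted cycle vectors, and `x̂` together with all the
hatted cycle vectors lie in `LatZ r`. -/
noncomputable def BadWith {n m c : ℕ} {ends : Fin m → Fin n × Fin n}
    (ρs : Fin c → SimpleCycle ends) (σ : Fin m → Fin n × Fin n) (ε : Fin m → ℤ)
    (xhat : Fin (m + 1) → ℤ) (r : Fin m → ℤ) : Prop :=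
  castR xhat ∉ Submodule.span ℝ (Set.range fun i => castR (hatCycVec (ρs i) σ ε)) ∧
    xhat ∈ LatZ r ∧ ∀ i, hatCycVec (ρs i) σ ε ∈ LatZ r

/-- `p` is *sad* with `(σ, x̂)`: `r := ℓ_σ(p) + ε` has all coordinates in `{-1, 0, …, B}`
and `r` is bad with `(σ, x̂)`. -/
noncomputable def SadWith {n m c : ℕ} {ends : Fin m → Fin n × Fin n}
    (ρs : Fin c → SimpleCycle ends) (σ : Fin m → Fin n × Fin n) (ε : Fin m → ℤ)
    (xhat : Fin (m + 1) → ℤ) (B : ℕ) (p : Fin n → ℤ) : Prop :=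
  (∀ e, -1 ≤ omeas σ p e + ε e ∧ omeas σ p e + ε e ≤ (B : ℤ)) ∧
    BadWith ρs σ ε xhat (fun e => omeas σ p e + ε e)

section Token

open Finset

variable {n : ℕ}

/-- The "level" of position `k` determined by a boolean block-start pattern `b`:
the largest `j ≤ k` with `b j = true` (or `0`). -/
def rankLevel (b : Fin n → Bool) (k : Fin n) : ℕ :=
  (Finset.univ.filter (fun j : Fin n => b j = true ∧ j ≤ k)).sup (fun j => (j : ℕ))

/-- The level of a vertex under a token `(w, b)`. -/
def tokLevel (τ : Equiv.Perm (Fin n) × (Fin n → Bool)) (i : Fin n) : ℕ :=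
  rankLevel τ.2 (τ.1⁻¹ i)

/-- The canonical token of a configuration `p`. -/
noncomputable def tokOf (p : Fin n → ℤ) : Equiv.Perm (Fin n) × (Fin n → Bool) :=
  (Tuple.sort p,
    fun k => decide (∀ j, j < k → p (Tuple.sort p j) < p (Tuple.sort p k)))

theorem rankLevel_tokOf (p : Fin n → ℤ) (k : Fin n) :
    ∃ j₀ : Fin n, rankLevel (tokOf p).2 k = (j₀ : ℕ) ∧ j₀ ≤ k ∧
      p (Tuple.sort p j₀) = p (Tuple.sort p k) ∧
      (∀ j', j' < j₀ → p (Tuple.sort p j') < p (Tuple.sort p j₀)) := by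
  set w := Tuple.sort p with hw
  have hmono : Monotone (p ∘ w) := Tuple.monotone_sort p
  -- the minimal index whose value equals that of k
  set s : Finset (Fin n) := Finset.univ.filter (fun j => p (w j) = p (w k)) with hs
  have hks : k ∈ s := by simp [hs]
  have hsne : s.Nonempty := ⟨k, hks⟩
  set j₀ := s.min' hsne with hj₀
  have hj₀s : j₀ ∈ s := s.min'_mem hsne
  have hj₀val : p (w j₀) = p (w k) := by simpa [hs] using hj₀s
  have hj₀k : j₀ ≤ k := s.min'_le k hks
  have hblock : ∀ j', j' < j₀ → p (w j') < p (w j₀) := by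
    intro j' hj'
    rcases lt_or_eq_of_le (hmono (le_of_lt (lt_of_lt_of_le hj' hj₀k))) with h | h
    · rw [hj₀val]; simpa using h
    · exfalso
      have hm : p (w j') = p (w k) := by simpa using h
      have : j' ∈ s := by simp [hs, hm]
      exact absurd (s.min'_le j' this) (not_le.mpr hj')
  refine ⟨j₀, ?_, hj₀k, hj₀val, hblock⟩
  have hbj₀ : (tokOf p).2 j₀ = true := by
    simp only [tokOf, decide_eq_true_eq]
    exact hblock
  have hj₀mem : j₀ ∈ Finset.univ.filter (fun j : Fin n => (tokOf p).2 j = true ∧ j ≤ k) := by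
    simp [hbj₀, hj₀k]
  apply le_antisymm
  · apply Finset.sup_le
    intro j hj
    simp only [Finset.mem_filter, tokOf, decide_eq_true_eq] at hj
    obtain ⟨-, hbj, hjk⟩ := hj
    -- j is a block start with j ≤ k; show j ≤ j₀
    by_contra hlt
    push_neg at hlt
    have hj₀j : j₀ < j := by exact_mod_cast hlt
    have h1 : p (w j₀) < p (w j) := hbj j₀ hj₀j
    have h2 : p (w j) ≤ p (w k) := hmono hjk
    rw [hj₀val] at h1; omega
  · exact Finset.le_sup hj₀mem

theorem tokOf_lt_iff (p : Fin n → ℤ) (i j : Fin n) :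
    tokLevel (tokOf p) i < tokLevel (tokOf p) j ↔ p i < p j := by
  set w := Tuple.sort p with hw
  have hmono : Monotone (p ∘ w) := Tuple.monotone_sort p
  have hwi : p (w ((tokOf p).1⁻¹ i)) = p i := by
    simp [tokOf, hw]
  have hwj : p (w ((tokOf p).1⁻¹ j)) = p j := by
    simp [tokOf, hw]
  obtain ⟨a, ha, hak, hav, hab⟩ := rankLevel_tokOf p ((tokOf p).1⁻¹ i)
  obtain ⟨b, hb, hbk, hbv, hbb⟩ := rankLevel_tokOf p ((tokOf p).1⁻¹ j)
  rw [tokLevel, tokLevel, ha, hb]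
  rw [hwi] at hav; rw [hwj] at hbv
  constructor
  · intro hab'
    have : a < b := by exact_mod_cast hab'
    have := hbb a this
    rw [hav, hbv] at this; exact this
  · intro hpij
    have hba : a < b := by
      by_contra hle
      push_neg at hle
      have := hmono hle
      simp only [Function.comp_apply] at this
      rw [hav, hbv] at this; omega
    exact_mod_cast hba

end Token
section IncMeas

open Finset

variable {n m : ℕ}

/-- Integer incidence matrix. -/
def incI (σ : Fin m → Fin n × Fin n) (e : Fin m) (u : Fin n) : ℤ :=
  if u = (σ e).2 then 1 else if u = (σ e).1 then -1 else 0

theorem incI_cast (σ : Fin m → Fin n × Fin n) (e : Fin m) (u : Fin n) :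
    ((incI σ e u : ℤ) : ℝ) = inc σ e u := by
  simp [incI, inc, apply_ite (fun z : ℤ => (z : ℝ))]

theorem sum_incI_mul (σ : Fin m → Fin n × Fin n) (e : Fin m)
    (hne : (σ e).1 ≠ (σ e).2) (p : Fin n → ℤ) :
    ∑ u, incI σ e u * p u = p (σ e).2 - p (σ e).1 := by
  have : ∀ u, incI σ e u * p u =
      (if u = (σ e).2 then p u else 0) - (if u = (σ e).1 then p u else 0) := by
    intro u
    by_cases h2 : u = (σ e).2
    · have h1 : u ≠ (σ e).1 := by rw [h2]; exact fun h => hne h.symm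
      simp [incI, h2, h1, if_neg (Ne.symm hne)]
    · by_cases h1 : u = (σ e).1
      · simp [incI, h2, h1, if_neg hne]
      · simp [incI, h2, h1]
  rw [Finset.sum_congr rfl (fun u _ => this u), Finset.sum_sub_distrib,
    Finset.sum_ite_eq' univ (σ e).2 p, Finset.sum_ite_eq' univ (σ e).1 p]
  simp

theorem omeas_eq_sum (σ : Fin m → Fin n × Fin n) (e : Fin m)
    (hne : (σ e).1 ≠ (σ e).2) (p : Fin n → ℤ) :
    omeas σ p e = ∑ u, incI σ e u * p u := by
  rw [sum_incI_mul σ e hne p]; rfl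

theorem configOrient_isOrientation (ends : Fin m → Fin n × Fin n) (p : Fin n → ℤ) :
    IsOrientation ends (configOrient ends p) := by
  intro e
  unfold configOrient
  split <;> simp

theorem orient_ne (ends σ : Fin m → Fin n × Fin n) (hor : IsOrientation ends σ)
    (hloop : ∀ e, (ends e).1 ≠ (ends e).2) (e : Fin m) : (σ e).1 ≠ (σ e).2 := by
  rcases hor e with h | h <;> rw [h]
  · exact hloop e
  · exact (hloop e).symm

theorem meas_eq_omeas (ends : Fin m → Fin n × Fin n) (p : Fin n → ℤ) :
    meas ends p = omeas (configOrient ends p) p := by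
  funext e
  unfold meas omeas configOrient
  split
  · next h => rw [abs_of_pos (by omega)]
  · next h => simp only []; rw [abs_of_nonpos (by omega)]; ring

/-- linear functional cutting out the last-coordinate relation of `LatZ r`. -/
def lastFun (r : Fin m → ℤ) : (Fin (m + 1) → ℤ) →ₗ[ℤ] ℤ where
  toFun y := y (Fin.last m) - ∑ e, r e * y (Fin.castSucc e)
  map_add' y z := by
    simp only [Pi.add_apply, mul_add, Finset.sum_add_distrib]; ring
  map_smul' c y := by
    simp only [Pi.smul_apply, smul_eq_mul, RingHom.id_apply, mul_sub, Finset.mul_sum]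
    congr 1
    exact Finset.sum_congr rfl (fun e _ => by ring)

theorem latZ_last {r : Fin m → ℤ} {y : Fin (m + 1) → ℤ} (hy : y ∈ LatZ r) :
    y (Fin.last m) = ∑ e, r e * y (Fin.castSucc e) := by
  have hsub : LatZ r ≤ LinearMap.ker (lastFun r) := by
    rw [LatZ, Submodule.span_le]
    rintro _ ⟨e, rfl⟩
    simp only [SetLike.mem_coe, LinearMap.mem_ker, lastFun, LinearMap.coe_mk, AddHom.coe_mk]
    rw [latCol]
    simp only [Fin.snoc_last, Fin.snoc_castSucc]
    rw [Finset.sum_congr rfl (fun e' _ => by rw [mul_ite, mul_one, mul_zero]),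
      Finset.sum_ite_eq' univ e r]
    simp
  have := hsub hy
  rw [LinearMap.mem_ker, lastFun] at this
  simp only [LinearMap.coe_mk, AddHom.coe_mk] at this
  omega

end IncMeas
section Cyc

open Finset

variable {n m : ℕ} {ends : Fin m → Fin n × Fin n}

theorem SimpleCycle.v_ne (ρ : SimpleCycle ends) (i : ZMod ρ.k) : ρ.v i ≠ ρ.v (i + 1) := by
  intro h
  have h1 : i = i + 1 := ρ.hv h
  have h2 : (1 : ZMod ρ.k) = 0 := (left_eq_add.mp h1)
  haveI : NeZero ρ.k := ⟨by have := ρ.hk; omega⟩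
  have h3 : ((1 : ℕ) : ZMod ρ.k) = 0 := by exact_mod_cast h2
  rw [ZMod.natCast_eq_zero_iff] at h3
  have := Nat.le_of_dvd one_pos h3
  have := ρ.hk
  omega

theorem cycVec_on_cycle (ρ : SimpleCycle ends) (σ : Fin m → Fin n × Fin n) (i : ZMod ρ.k) :
    cycVec ρ σ (ρ.edge i) =
      if σ (ρ.edge i) = (ρ.v i, ρ.v (i + 1)) then 1 else -1 := by
  classical
  rw [cycVec]
  have h : ∃ i', ρ.edge i' = ρ.edge i := ⟨i, rfl⟩
  rw [dif_pos h]
  have hc : h.choose = i := ρ.hedge h.choose_spec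
  rw [hc]

theorem cycVec_off_cycle (ρ : SimpleCycle ends) (σ : Fin m → Fin n × Fin n) (e : Fin m)
    (he : ¬∃ i, ρ.edge i = e) : cycVec ρ σ e = 0 := by
  rw [cycVec, dif_neg he]

/-- The per-edge incidence-times-cycle-vector identity. -/
theorem incI_mul_cycVec (ρ : SimpleCycle ends) (σ : Fin m → Fin n × Fin n)
    (hor : IsOrientation ends σ) (i : ZMod ρ.k) (u : Fin n) :
    incI σ (ρ.edge i) u * cycVec ρ σ (ρ.edge i) =
      (if u = ρ.v (i + 1) then 1 else 0) - (if u = ρ.v i then 1 else 0) := by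
  have hvne := ρ.v_ne i
  rw [cycVec_on_cycle]
  have hσ : σ (ρ.edge i) = (ρ.v i, ρ.v (i + 1)) ∨ σ (ρ.edge i) = (ρ.v (i + 1), ρ.v i) := by
    rcases hor (ρ.edge i) with h | h <;> rcases ρ.hends i with h' | h' <;>
      rw [h, h'] <;> simp
  rcases hσ with h | h
  · rw [if_pos h, mul_one]
    by_cases h2 : u = ρ.v (i + 1)
    · have h1 : u ≠ ρ.v i := by rw [h2]; exact fun hh => hvne hh.symm
      simp [incI, h, h2, h1, hvne, Ne.symm hvne]
    · by_cases h1 : u = ρ.v i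
      · simp [incI, h, h2, h1, hvne, Ne.symm hvne]
      · simp [incI, h, h2, h1, hvne, Ne.symm hvne]
  · have hne : σ (ρ.edge i) ≠ (ρ.v i, ρ.v (i + 1)) := by
      rw [h]
      intro hh
      rw [Prod.mk.injEq] at hh
      exact hvne hh.2
    rw [if_neg hne, mul_neg, mul_one]
    by_cases h2 : u = ρ.v i
    · have h1 : u ≠ ρ.v (i + 1) := by rw [h2]; exact hvne
      simp [incI, h, h2, h1, hvne, Ne.symm hvne]
    · by_cases h1 : u = ρ.v (i + 1)
      · simp [incI, h, h2, h1, hvne, Ne.symm hvne]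
      · simp [incI, h, h2, h1, hvne, Ne.symm hvne]

/-- The cycle vector lies in the left kernel of the incidence matrix (integer form). -/
theorem sum_incI_cycVec (ρ : SimpleCycle ends) (σ : Fin m → Fin n × Fin n)
    (hor : IsOrientation ends σ) (u : Fin n) :
    ∑ e, incI σ e u * cycVec ρ σ e = 0 := by
  classical
  haveI : NeZero ρ.k := ⟨by have := ρ.hk; omega⟩
  have h1 : ∑ e, incI σ e u * cycVec ρ σ e
      = ∑ e ∈ Finset.univ.image ρ.edge, incI σ e u * cycVec ρ σ e := by
    refine (Finset.sum_subset (Finset.subset_univ _) ?_).symm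
    intro e _ he
    have : ¬∃ i, ρ.edge i = e := by
      intro ⟨i, hi⟩
      exact he (Finset.mem_image.mpr ⟨i, Finset.mem_univ i, hi⟩)
    rw [cycVec_off_cycle ρ σ e this, mul_zero]
  rw [h1, Finset.sum_image (fun a _ b _ h => ρ.hedge h)]
  rw [Finset.sum_congr rfl (fun i _ => incI_mul_cycVec ρ σ hor i u)]
  rw [Finset.sum_sub_distrib]
  have h2 : ∑ i : ZMod ρ.k, (if u = ρ.v (i + 1) then (1:ℤ) else 0)
      = ∑ i : ZMod ρ.k, (if u = ρ.v i then (1:ℤ) else 0) :=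
    Fintype.sum_equiv (Equiv.addRight (1 : ZMod ρ.k)) _ _ (fun i => rfl)
  rw [h2, sub_self]

/-- Sign relation between cycle vectors under two orientations. -/
theorem cycVec_orient (ρ : SimpleCycle ends) (σ : Fin m → Fin n × Fin n)
    (hor : IsOrientation ends σ) (e : Fin m) :
    cycVec ρ σ e = (if σ e = ends e then 1 else -1) * cycVec ρ ends e := by
  classical
  by_cases h : ∃ i, ρ.edge i = e
  · obtain ⟨i, rfl⟩ := h
    have hvne := ρ.v_ne i
    rw [cycVec_on_cycle, cycVec_on_cycle]
    by_cases hσ : σ (ρ.edge i) = ends (ρ.edge i)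
    · rw [if_pos hσ, hσ, one_mul]
    · rw [if_neg hσ]
      rcases hor (ρ.edge i) with h' | h'
      · exact absurd h' hσ
      · rcases ρ.hends i with h'' | h''
        · have e1 : σ (ρ.edge i) ≠ (ρ.v i, ρ.v (i + 1)) := by
            rw [h', h'']
            intro hh
            simp only [Prod.mk.injEq] at hh
            exact hvne hh.2
          rw [if_neg e1, if_pos h'']
          ring
        · have e1 : σ (ρ.edge i) = (ρ.v i, ρ.v (i + 1)) := by rw [h', h'']
          have e2 : ends (ρ.edge i) ≠ (ρ.v i, ρ.v (i + 1)) := by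
            rw [h'']
            intro hh
            simp only [Prod.mk.injEq] at hh
            exact hvne hh.1.symm
          rw [if_pos e1, if_neg e2]
          ring
  · rw [cycVec_off_cycle ρ σ e h, cycVec_off_cycle ρ ends e h, mul_zero]

end Cyc
section Span

open Finset Module Matrix

variable {n m : ℕ} {ends σ : Fin m → Fin n × Fin n}

theorem sum_inc_mul (σ : Fin m → Fin n × Fin n) (e : Fin m)
    (hne : (σ e).1 ≠ (σ e).2) (q : Fin n → ℝ) :
    ∑ u, inc σ e u * q u = q (σ e).2 - q (σ e).1 := by
  have : ∀ u, inc σ e u * q u =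
      (if u = (σ e).2 then q u else 0) - (if u = (σ e).1 then q u else 0) := by
    intro u
    by_cases h2 : u = (σ e).2
    · have h1 : u ≠ (σ e).1 := by rw [h2]; exact fun h => hne h.symm
      simp [inc, h2, h1, if_neg (Ne.symm hne)]
    · by_cases h1 : u = (σ e).1
      · simp [inc, h2, h1, if_neg hne]
      · simp [inc, h2, h1]
  rw [Finset.sum_congr rfl (fun u _ => this u), Finset.sum_sub_distrib,
    Finset.sum_ite_eq' univ (σ e).2 q, Finset.sum_ite_eq' univ (σ e).1 q]
  simp

theorem ker_inc_eq_span_one (hn : 0 < n) (hloop : ∀ e, (ends e).1 ≠ (ends e).2)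
    (hconn : IsConn ends) (hor : IsOrientation ends σ) :
    LinearMap.ker (inc σ).mulVecLin = Submodule.span ℝ {fun _ => (1 : ℝ)} := by
  apply le_antisymm
  · intro q hq
    rw [LinearMap.mem_ker] at hq
    have heq : ∀ e, q (σ e).2 = q (σ e).1 := by
      intro e
      have h0 := congrFun hq e
      rw [Matrix.mulVecLin_apply] at h0
      have h1 : (inc σ).mulVec q e = ∑ u, inc σ e u * q u := rfl
      rw [h1, sum_inc_mul σ e (orient_ne ends σ hor hloop e) q] at h0
      simp only [Pi.zero_apply] at h0
      linarith
    have hstep : ∀ a b : Fin n, (∃ e, ends e = (a, b) ∨ ends e = (b, a)) → q a = q b := by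
      rintro a b ⟨e, he | he⟩ <;> rcases hor e with h | h
      · have := heq e; rw [h, he] at this; exact this.symm
      · have := heq e; rw [h, he] at this; exact this
      · have := heq e; rw [h, he] at this; exact this
      · have := heq e; rw [h, he] at this; exact this.symm
    have hall : ∀ a b : Fin n, q a = q b := by
      intro a b
      induction hconn a b with
      | refl => rfl
      | tail _ hbc ih => exact ih.trans (hstep _ _ hbc)
    rw [Submodule.mem_span_singleton]
    refine ⟨q ⟨0, hn⟩, ?_⟩
    funext u
    simp [hall u ⟨0, hn⟩]
  · rw [Submodule.span_le, Set.singleton_subset_iff]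
    simp only [SetLike.mem_coe, LinearMap.mem_ker]
    funext e
    rw [Matrix.mulVecLin_apply]
    have h1 : (inc σ).mulVec (fun _ => (1:ℝ)) e = ∑ u, inc σ e u * 1 := rfl
    rw [h1, sum_inc_mul σ e (orient_ne ends σ hor hloop e) (fun _ => (1:ℝ))]
    simp

theorem finrank_ker_transpose (hn : 0 < n) (hloop : ∀ e, (ends e).1 ≠ (ends e).2)
    (hconn : IsConn ends) (hor : IsOrientation ends σ) :
    Module.finrank ℝ (LinearMap.ker ((inc σ)ᵀ).mulVecLin) = m - (n - 1) := by
  have hone : (fun _ => (1 : ℝ) : Fin n → ℝ) ≠ 0 := by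
    intro h
    have := congrFun h ⟨0, hn⟩
    simp at this
  have h1 : Module.finrank ℝ (LinearMap.ker (inc σ).mulVecLin) = 1 := by
    rw [ker_inc_eq_span_one hn hloop hconn hor]
    exact finrank_span_singleton hone
  have h2 := LinearMap.finrank_range_add_finrank_ker (inc σ).mulVecLin
  rw [h1, Module.finrank_pi] at h2
  have hrank : (inc σ).rank = n - 1 := by
    rw [Matrix.rank]
    simp only [Fintype.card_fin] at h2
    omega
  have h3 := LinearMap.finrank_range_add_finrank_ker ((inc σ)ᵀ).mulVecLin
  have h4 : Module.finrank ℝ (LinearMap.range ((inc σ)ᵀ).mulVecLin) = n - 1 := by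
    rw [← Matrix.rank, Matrix.rank_transpose, hrank]
  rw [h4, Module.finrank_pi, Fintype.card_fin] at h3
  omega

theorem span_cycVec_eq_ker (hn : 2 ≤ n) (hG : IsSimple ends) (hconn : IsConn ends)
    (ρs : Fin (m - n + 1) → SimpleCycle ends)
    (hbasis : LinearIndependent ℝ fun i => castR (cycVec (ρs i) ends))
    (hor : IsOrientation ends σ) :
    Submodule.span ℝ (Set.range fun i => castR (cycVec (ρs i) σ)) =
      LinearMap.ker ((inc σ)ᵀ).mulVecLin := by
  classical
  have hloop := hG.1
  -- linear independence of the σ-cycle vectors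
  have hli : LinearIndependent ℝ (fun i => castR (cycVec (ρs i) σ)) := by
    set d : Fin m → ℝ := fun e => if σ e = ends e then 1 else -1 with hd
    have hdne : ∀ e, d e ≠ 0 := by
      intro e; rw [hd]; dsimp only; split <;> norm_num
    set f : (Fin m → ℝ) →ₗ[ℝ] (Fin m → ℝ) :=
      LinearMap.pi (fun e => d e • LinearMap.proj e) with hf
    have hfapp : ∀ y e, f y e = d e * y e := fun y e => rfl
    have hker : LinearMap.ker f = ⊥ := by
      rw [LinearMap.ker_eq_bot']
      intro y hy
      funext e
      have := congrFun hy e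
      rw [hfapp] at this
      have := (mul_eq_zero.mp this).resolve_left (hdne e)
      simpa using this
    have hmap := hbasis.map' f hker
    have : (f ∘ fun i => castR (cycVec (ρs i) ends)) = fun i => castR (cycVec (ρs i) σ) := by
      funext i
      funext e
      rw [Function.comp_apply, hfapp]
      rw [castR, castR]
      rw [cycVec_orient (ρs i) σ hor e, hd]
      dsimp only
      split <;> push_cast <;> ring
    rwa [this] at hmap
  -- membership of cycle vectors in the kernel
  have hmem : ∀ i, castR (cycVec (ρs i) σ) ∈ LinearMap.ker ((inc σ)ᵀ).mulVecLin := by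
    intro i
    rw [LinearMap.mem_ker]
    funext u
    rw [Matrix.mulVecLin_apply]
    have h1 : ((inc σ)ᵀ).mulVec (castR (cycVec (ρs i) σ)) u
        = ∑ e, inc σ e u * castR (cycVec (ρs i) σ) e := by
      show ∑ e, (inc σ)ᵀ u e * castR (cycVec (ρs i) σ) e = _
      exact Finset.sum_congr rfl fun e _ => by rw [Matrix.transpose_apply]
    rw [h1]
    have h0 := sum_incI_cycVec (ρs i) σ hor u
    have h2 : ∑ e, inc σ e u * castR (cycVec (ρs i) σ) e
        = ((∑ e, incI σ e u * cycVec (ρs i) σ e : ℤ) : ℝ) := by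
      push_cast
      exact Finset.sum_congr rfl fun e _ => by rw [← incI_cast]; rfl
    rw [h2, h0]
    simp
  apply Submodule.eq_of_le_of_finrank_le
  · rw [Submodule.span_le]
    rintro _ ⟨i, rfl⟩
    exact hmem i
  · rw [finrank_ker_transpose (by omega) hloop hconn hor]
    rw [finrank_span_eq_card hli, Fintype.card_fin]
    omega

end Span
section Cert

open Finset Matrix

variable {n m : ℕ}

/-- The orientation determined by a token. -/
def sigOf (ends : Fin m → Fin n × Fin n) (τ : Equiv.Perm (Fin n) × (Fin n → Bool)) :
    Fin m → Fin n × Fin n :=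
  fun e => if tokLevel τ (ends e).1 < tokLevel τ (ends e).2 then ends e
    else ((ends e).2, (ends e).1)

theorem sigOf_tokOf (ends : Fin m → Fin n × Fin n) (p : Fin n → ℤ) :
    sigOf ends (tokOf p) = configOrient ends p := by
  funext e
  show (if _ then _ else _) = (if _ then _ else _)
  exact if_congr (tokOf_lt_iff p _ _) rfl rfl

/-- The certificate-determined coefficient vector. -/
def certVec (ends : Fin m → Fin n × Fin n)
    (c : (Fin (m + 1) → ℤ) × (Fin m → ℤ) × (Equiv.Perm (Fin n) × (Fin n → Bool)))
    (u : Fin n) : ℤ :=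
  ∑ e, c.1 (Fin.castSucc e) * incI (sigOf ends c.2.2) e u

/-- The certificate-determined target value. -/
def certT {n : ℕ} (m : ℕ)
    (c : (Fin (m + 1) → ℤ) × (Fin m → ℤ) × (Equiv.Perm (Fin n) × (Fin n → Bool))) : ℤ :=
  c.1 (Fin.last m) - ∑ e, c.2.1 e * c.1 (Fin.castSucc e)

theorem key_eq (ends : Fin m → Fin n × Fin n) (hloop : ∀ e, (ends e).1 ≠ (ends e).2)
    (p : Fin n → ℤ) (ε : Fin m → ℤ) (xhat : Fin (m + 1) → ℤ)
    (hx : xhat ∈ LatZ (fun e => meas ends p e + ε e))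
    (τ : Equiv.Perm (Fin n) × (Fin n → Bool)) (hτ : sigOf ends τ = configOrient ends p) :
    ∑ u, certVec ends (xhat, ε, τ) u * p u = certT m (xhat, ε, τ) := by
  have hlast := latZ_last hx
  have hswap : ∑ u, certVec ends (xhat, ε, τ) u * p u
      = ∑ e, xhat (Fin.castSucc e) * meas ends p e := by
    simp only [certVec, hτ, Finset.sum_mul]
    rw [Finset.sum_comm]
    apply Finset.sum_congr rfl
    intro e _
    rw [meas_eq_omeas ends p,
      omeas_eq_sum _ e (orient_ne ends _ (configOrient_isOrientation ends p) hloop e) p,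
      Finset.mul_sum]
    apply Finset.sum_congr rfl
    intro u _
    ring
  rw [hswap, certT]
  dsimp only
  rw [hlast, ← Finset.sum_sub_distrib]
  apply Finset.sum_congr rfl
  intro e _
  ring

theorem certVec_exists_ne (hn : 2 ≤ n) {ends : Fin m → Fin n × Fin n}
    (hG : IsSimple ends) (hconn : IsConn ends)
    (ρs : Fin (m - n + 1) → SimpleCycle ends)
    (hbasis : LinearIndependent ℝ fun i => castR (cycVec (ρs i) ends))
    (p : Fin n → ℤ) (ε : Fin m → ℤ) (xhat : Fin (m + 1) → ℤ)
    (hx : xhat ∈ LatZ (fun e => meas ends p e + ε e))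
    (hspan : castR xhat ∉ Submodule.span ℝ
      (Set.range fun i => castR (hatCycVec (ρs i) (configOrient ends p) ε)))
    (τ : Equiv.Perm (Fin n) × (Fin n → Bool)) (hτ : sigOf ends τ = configOrient ends p) :
    ∃ u, certVec ends (xhat, ε, τ) u ≠ 0 := by
  by_contra hz
  push_neg at hz
  set σp := configOrient ends p with hσp
  have hor : IsOrientation ends σp := configOrient_isOrientation ends p
  have hloop := hG.1
  set x : Fin m → ℤ := fun e => xhat (Fin.castSucc e) with hxdef
  -- the first m coordinates lie in the kernel of the transposed incidence matrix
  have hker : castR x ∈ LinearMap.ker ((inc σp)ᵀ).mulVecLin := by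
    rw [LinearMap.mem_ker]
    funext u
    have h1 : ((inc σp)ᵀ).mulVec (castR x) u = ∑ e, inc σp e u * castR x e := by
      show ∑ e, (inc σp)ᵀ u e * castR x e = _
      exact Finset.sum_congr rfl fun e _ => by rw [Matrix.transpose_apply]
    rw [Matrix.mulVecLin_apply, h1]
    have h2 : ∑ e, inc σp e u * castR x e = ((∑ e, incI σp e u * x e : ℤ) : ℝ) := by
      push_cast
      exact Finset.sum_congr rfl fun e _ => by rw [← incI_cast]; rfl
    have h3 : ∑ e, incI σp e u * x e = certVec ends (xhat, ε, τ) u := by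
      rw [certVec]
      apply Finset.sum_congr rfl
      intro e _
      rw [hτ]
      exact mul_comm (incI σp e u) (x e)
    rw [h2, h3, hz u]
    simp
  rw [← span_cycVec_eq_ker hn hG hconn ρs hbasis hor] at hker
  rw [Submodule.mem_span_range_iff_exists_fun] at hker
  obtain ⟨a, ha⟩ := hker
  have hacoord : ∀ e, ∑ i, a i * ((cycVec (ρs i) σp e : ℤ) : ℝ) = ((x e : ℤ) : ℝ) := by
    intro e
    have := congrFun ha e
    simpa [castR] using this
  -- the measured part of the last coordinate vanishes
  have hmz : ∑ e, x e * meas ends p e = 0 := by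
    have h1 : ∑ u, certVec ends (xhat, ε, τ) u * p u = 0 := by
      apply Finset.sum_eq_zero
      intro u _
      rw [hz u, zero_mul]
    have h2 : ∑ u, certVec ends (xhat, ε, τ) u * p u = ∑ e, x e * meas ends p e := by
      simp only [certVec, Finset.sum_mul]
      rw [Finset.sum_comm]
      apply Finset.sum_congr rfl
      intro e _
      rw [meas_eq_omeas ends p,
        omeas_eq_sum _ e (orient_ne ends _ hor hloop e) p, Finset.mul_sum]
      apply Finset.sum_congr rfl
      intro u _
      rw [hτ]
      exact mul_assoc (x e) (incI σp e u) (p u)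
    rw [← h2, h1]
  have hlast := latZ_last hx
  have hlast2 : xhat (Fin.last m) = ∑ e, ε e * x e := by
    rw [hlast]
    have : ∀ e ∈ Finset.univ, (meas ends p e + ε e) * xhat (Fin.castSucc e)
        = x e * meas ends p e + ε e * x e := fun e _ => by rw [hxdef]; ring
    rw [Finset.sum_congr rfl this, Finset.sum_add_distrib, hmz, zero_add]
  -- conclude that xhat lies in the span, contradiction
  apply hspan
  have hrep : castR xhat = ∑ i, a i • castR (hatCycVec (ρs i) σp ε) := by
    funext j
    show (xhat j : ℝ) = _
    rw [Finset.sum_apply]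
    induction j using Fin.lastCases
    case last =>
      simp only [Pi.smul_apply, smul_eq_mul, castR, hatCycVec, Fin.snoc_last]
      rw [hlast2]
      push_cast
      symm
      calc ∑ i, a i * ∑ e, ((ε e : ℝ) * (cycVec (ρs i) σp e : ℝ))
          = ∑ i, ∑ e, a i * ((ε e : ℝ) * (cycVec (ρs i) σp e : ℝ)) :=
            Finset.sum_congr rfl fun i _ => Finset.mul_sum _ _ _
        _ = ∑ e, ∑ i, a i * ((ε e : ℝ) * (cycVec (ρs i) σp e : ℝ)) := Finset.sum_comm
        _ = ∑ e, (ε e : ℝ) * ∑ i, a i * (cycVec (ρs i) σp e : ℝ) := by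
            refine Finset.sum_congr rfl fun e _ => ?_
            rw [Finset.mul_sum]
            exact Finset.sum_congr rfl fun i _ => by ring
        _ = ∑ e, (ε e : ℝ) * (x e : ℝ) :=
            Finset.sum_congr rfl fun e _ => by rw [hacoord e]
    case cast e =>
      simp only [Pi.smul_apply, smul_eq_mul, castR, hatCycVec, Fin.snoc_castSucc]
      rw [← hacoord e]
  rw [hrep]
  exact Submodule.sum_mem _ fun i _ =>
    Submodule.smul_mem _ _ (Submodule.subset_span ⟨i, rfl⟩)

end Cert
section Main

open Finset Matrix

theorem abs_le_of_norm2_le {d : ℕ} {y : Fin d → ℤ} {N : ℝ} (h : norm2 y ≤ N) (j : Fin d) :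
    |(y j : ℝ)| ≤ N := by
  refine le_trans ?_ h
  rw [norm2, ← Real.sqrt_sq_eq_abs]
  exact Real.sqrt_le_sqrt (Finset.single_le_sum (fun i _ => sq_nonneg ((y i : ℝ)))
    (Finset.mem_univ j))

open Classical in
/-- A chosen certificate for a bad configuration. -/
noncomputable def badWitness {n m c : ℕ} (ends : Fin m → Fin n × Fin n)
    (ρs : Fin c → SimpleCycle ends) (N : ℝ) (p : Fin n → ℤ) :
    (Fin (m + 1) → ℤ) × (Fin m → ℤ) × (Equiv.Perm (Fin n) × (Fin n → Bool)) :=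
  if hp : ∃ ε : Fin m → ℤ, SmallVec ε ∧ ∃ xhat : Fin (m + 1) → ℤ,
      xhat ∈ LatZ (fun e => meas ends p e + ε e) ∧ norm2 xhat ≤ N ∧
      castR xhat ∉ Submodule.span ℝ
        (Set.range fun i => castR (hatCycVec (ρs i) (configOrient ends p) ε))
  then (hp.choose_spec.2.choose, hp.choose, tokOf p)
  else (0, 0, tokOf p)

theorem badWitness_spec {n m c : ℕ} (ends : Fin m → Fin n × Fin n)
    (ρs : Fin c → SimpleCycle ends) (N : ℝ) (p : Fin n → ℤ)
    (hp : ∃ ε : Fin m → ℤ, SmallVec ε ∧ ∃ xhat : Fin (m + 1) → ℤ,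
      xhat ∈ LatZ (fun e => meas ends p e + ε e) ∧ norm2 xhat ≤ N ∧
      castR xhat ∉ Submodule.span ℝ
        (Set.range fun i => castR (hatCycVec (ρs i) (configOrient ends p) ε))) :
    SmallVec (badWitness ends ρs N p).2.1 ∧
    (badWitness ends ρs N p).1 ∈
      LatZ (fun e => meas ends p e + (badWitness ends ρs N p).2.1 e) ∧
    norm2 (badWitness ends ρs N p).1 ≤ N ∧
    castR (badWitness ends ρs N p).1 ∉ Submodule.span ℝ
      (Set.range fun i =>
        castR (hatCycVec (ρs i) (configOrient ends p) (badWitness ends ρs N p).2.1)) ∧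
    (badWitness ends ρs N p).2.2 = tokOf p := by
  unfold badWitness
  rw [dif_pos hp]
  exact ⟨hp.choose_spec.1, hp.choose_spec.2.choose_spec.1,
    hp.choose_spec.2.choose_spec.2.1, hp.choose_spec.2.choose_spec.2.2, rfl⟩

end Main

/-- for `p` uniform in `{1,…,B}^n`, the probability that there exist a
noise vector `ε ∈ {-1,0,1}^m` and a vector `x̂ ∈ LatZ(ℓ(p) + ε)` with
`‖x̂‖₂ ≤ (2m)^{1/2}·2^{m/2}` not in the real span of the hatted cycle vectors (formed
w.r.t. `σ_p` and `ε`) is at most `(3·(2m)^{1/2}·2^{m/2})^{m+1} · 3^m · 2^n · n! / B`. -/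
theorem stmt17 (n m : ℕ) (hn : 2 ≤ n) (hm : 1 ≤ m) (ends : Fin m → Fin n × Fin n)
    (hG : IsSimple ends) (hconn : IsConn ends)
    (ρs : Fin (m - n + 1) → SimpleCycle ends)
    (hbasis : LinearIndependent ℝ fun i => castR (cycVec (ρs i) ends))
    (B : ℕ) (hB : 2 ≤ B) :
    (Nat.card {p : Fin n → ℤ //
        (∀ i, 1 ≤ p i ∧ p i ≤ (B : ℤ)) ∧
        ∃ ε : Fin m → ℤ, SmallVec ε ∧
          ∃ xhat : Fin (m + 1) → ℤ,
            xhat ∈ LatZ (fun e => meas ends p e + ε e) ∧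
            norm2 xhat ≤ Real.sqrt (2 * m) * 2 ^ ((m : ℝ) / 2) ∧
            castR xhat ∉ Submodule.span ℝ
              (Set.range fun i => castR (hatCycVec (ρs i) (configOrient ends p) ε))} : ℝ) /
        (B : ℝ) ^ n ≤
      (3 * (Real.sqrt (2 * m) * 2 ^ ((m : ℝ) / 2))) ^ (m + 1) * 3 ^ m * 2 ^ n *
        Nat.factorial n / B := by
  classical
  have hloop := hG.1
  set N : ℝ := Real.sqrt (2 * m) * 2 ^ ((m : ℝ) / 2) with hN
  have hN1 : 1 ≤ N := by
    have h1 : (1 : ℝ) ≤ Real.sqrt (2 * m) := by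
      rw [show (1 : ℝ) = Real.sqrt 1 from (Real.sqrt_one).symm]
      apply Real.sqrt_le_sqrt
      have : (1 : ℝ) ≤ (m : ℝ) := by exact_mod_cast hm
      linarith
    have h2 : (1 : ℝ) ≤ 2 ^ ((m : ℝ) / 2) := by
      rw [show (1 : ℝ) = (2 : ℝ) ^ (0 : ℝ) from (Real.rpow_zero 2).symm]
      apply Real.rpow_le_rpow_of_exponent_le (by norm_num)
      positivity
    nlinarith
  set K : ℤ := ⌊N⌋ with hK
  have hK0 : 0 ≤ K := by
    rw [hK]
    exact_mod_cast Int.le_floor.mpr (by exact_mod_cast le_trans (by norm_num) hN1)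
  have hKN : (K : ℝ) ≤ N := Int.floor_le N
  have hBpos : (0 : ℝ) < B := by
    have : (2 : ℝ) ≤ B := by exact_mod_cast hB
    linarith
  -- the box and the bad set
  set box : Finset (Fin n → ℤ) := Fintype.piFinset (fun _ => Finset.Icc 1 (B : ℤ)) with hbox
  set Bad : Finset (Fin n → ℤ) := box.filter (fun p =>
    ∃ ε : Fin m → ℤ, SmallVec ε ∧
      ∃ xhat : Fin (m + 1) → ℤ,
        xhat ∈ LatZ (fun e => meas ends p e + ε e) ∧ norm2 xhat ≤ N ∧
        castR xhat ∉ Submodule.span ℝ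
          (Set.range fun i => castR (hatCycVec (ρs i) (configOrient ends p) ε))) with hBad
  -- Step A: the subtype count is the cardinality of Bad
  have hcard : Nat.card {p : Fin n → ℤ //
      (∀ i, 1 ≤ p i ∧ p i ≤ (B : ℤ)) ∧
      ∃ ε : Fin m → ℤ, SmallVec ε ∧
        ∃ xhat : Fin (m + 1) → ℤ,
          xhat ∈ LatZ (fun e => meas ends p e + ε e) ∧ norm2 xhat ≤ N ∧
          castR xhat ∉ Submodule.span ℝ
            (Set.range fun i => castR (hatCycVec (ρs i) (configOrient ends p) ε))}
      = Bad.card := by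
    have he : ∀ p : Fin n → ℤ,
        ((∀ i, 1 ≤ p i ∧ p i ≤ (B : ℤ)) ∧
          ∃ ε : Fin m → ℤ, SmallVec ε ∧
            ∃ xhat : Fin (m + 1) → ℤ,
              xhat ∈ LatZ (fun e => meas ends p e + ε e) ∧ norm2 xhat ≤ N ∧
              castR xhat ∉ Submodule.span ℝ
                (Set.range fun i => castR (hatCycVec (ρs i) (configOrient ends p) ε)))
          ↔ p ∈ Bad := by
      intro p
      rw [hBad, Finset.mem_filter, hbox, Fintype.mem_piFinset]
      simp only [Finset.mem_Icc]
    rw [Nat.card_congr (Equiv.subtypeEquivRight he), Nat.card_eq_finsetCard]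
  -- the witness map
  set F : (Fin n → ℤ) →
      (Fin (m + 1) → ℤ) × (Fin m → ℤ) × (Equiv.Perm (Fin n) × (Fin n → Bool)) :=
    badWitness ends ρs N with hF
  -- the certificate finset
  set certFinset : Finset
      ((Fin (m + 1) → ℤ) × (Fin m → ℤ) × (Equiv.Perm (Fin n) × (Fin n → Bool))) :=
    (Fintype.piFinset fun _ => Finset.Icc (-K) K) ×ˢ
      ((Fintype.piFinset fun _ => ({-1, 0, 1} : Finset ℤ)) ×ˢ Finset.univ) with hcert
  -- membership of witnesses
  have hmem : ∀ p ∈ Bad, F p ∈ certFinset := by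
    intro p hp
    rw [hBad, Finset.mem_filter] at hp
    obtain ⟨-, hp2⟩ := hp
    obtain ⟨hsmall, hlat, hnorm, hspan, htok⟩ := badWitness_spec ends ρs N p hp2
    rw [← hF] at hsmall hlat hnorm hspan htok
    rw [hcert, Finset.mem_product, Finset.mem_product]
    refine ⟨?_, ?_, Finset.mem_univ _⟩
    · rw [Fintype.mem_piFinset]
      intro j
      rw [Finset.mem_Icc]
      have habs := abs_le_of_norm2_le hnorm j
      constructor
      · rw [neg_le]
        apply Int.le_floor.mpr
        push_cast
        calc -((((F p).1 j : ℤ) : ℝ)) ≤ |(((F p).1 j : ℤ) : ℝ)| := neg_le_abs _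
          _ ≤ N := habs
      · apply Int.le_floor.mpr
        calc (((F p).1 j : ℤ) : ℝ) ≤ |(((F p).1 j : ℤ) : ℝ)| := le_abs_self _
          _ ≤ N := habs
    · rw [Fintype.mem_piFinset]
      intro e
      rcases hsmall e with h | h | h <;> simp [h]
  -- the key facts for members of a fiber
  have hfact : ∀ p ∈ Bad, ∀ c, F p = c →
      (∑ u, certVec ends c u * p u = certT m c) ∧ (∃ u, certVec ends c u ≠ 0) := by
    intro p hp c hFc
    rw [hBad, Finset.mem_filter] at hp
    obtain ⟨-, hp2⟩ := hp
    obtain ⟨hsmall, hlat, hnorm, hspan, htok⟩ := badWitness_spec ends ρs N p hp2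
    rw [← hF] at hsmall hlat hnorm hspan htok
    subst hFc
    have hτ : sigOf ends (F p).2.2 = configOrient ends p := by
      rw [htok]; exact sigOf_tokOf ends p
    constructor
    · have := key_eq ends hloop p (F p).2.1 (F p).1 hlat (F p).2.2 hτ
      exact this
    · have := certVec_exists_ne hn hG hconn ρs hbasis p (F p).2.1 (F p).1 hlat hspan
        (F p).2.2 hτ
      exact this
  -- each fiber has at most B^(n-1) elements
  have hfiber : ∀ c ∈ certFinset, (Bad.filter fun p => F p = c).card ≤ B ^ (n - 1) := by
    intro c _
    by_cases hex : ∃ u, certVec ends c u ≠ 0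
    · obtain ⟨j, hj⟩ := hex
      have hle : (Bad.filter fun p => F p = c).card ≤
          (Fintype.piFinset fun i =>
            if i = j then ({0} : Finset ℤ) else Finset.Icc 1 (B : ℤ)).card := by
        apply Finset.card_le_card_of_injOn (fun p => Function.update p j 0)
        · intro p hp
          rw [Finset.mem_coe, Finset.mem_filter] at hp
          have hpbox : p ∈ box := (Finset.mem_filter.mp hp.1).1
          rw [hbox, Fintype.mem_piFinset] at hpbox
          rw [Finset.mem_coe, Fintype.mem_piFinset]
          intro i
          by_cases hi : i = j
          · subst hi
            beta_reduce; rw [Function.update_self, if_pos rfl]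
            exact Finset.mem_singleton_self 0
          · beta_reduce; rw [Function.update_of_ne hi, if_neg hi]
            exact hpbox i
        · intro p hp q hq hupd
          rw [Finset.coe_filter, Set.mem_setOf_eq] at hp hq
          obtain ⟨heqp, -⟩ := hfact p hp.1 c hp.2
          obtain ⟨heqq, -⟩ := hfact q hq.1 c hq.2
          replace hupd : Function.update p j 0 = Function.update q j 0 := hupd
          have hoff : ∀ i, i ≠ j → p i = q i := by
            intro i hi
            have := congrFun hupd i
            rwa [Function.update_of_ne hi, Function.update_of_ne hi] at this
          have hsum : ∑ u, certVec ends c u * (p u - q u) = 0 := by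
            have : ∀ u ∈ Finset.univ, certVec ends c u * (p u - q u)
                = certVec ends c u * p u - certVec ends c u * q u := fun u _ => by ring
            rw [Finset.sum_congr rfl this, Finset.sum_sub_distrib, heqp, heqq, sub_self]
          have hsingle : certVec ends c j * (p j - q j) = 0 := by
            rw [← hsum]
            symm
            apply Finset.sum_eq_single j
            · intro u _ hu
              rw [hoff u hu, sub_self, mul_zero]
            · intro h; exact absurd (Finset.mem_univ j) h
          have : p j = q j := by
            rcases mul_eq_zero.mp hsingle with h | h
            · exact absurd h hj
            · exact sub_eq_zero.mp h
          funext i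
          by_cases hi : i = j
          · rw [hi]; exact this
          · exact hoff i hi
      refine le_trans hle (le_of_eq ?_)
      rw [Fintype.card_piFinset]
      rw [← Finset.mul_prod_erase Finset.univ _ (Finset.mem_univ j), if_pos rfl,
        Finset.card_singleton, one_mul]
      rw [Finset.prod_congr rfl (fun i hi => by rw [if_neg (Finset.mem_erase.mp hi).1]),
        Finset.prod_const, Int.card_Icc]
      rw [Finset.card_erase_of_mem (Finset.mem_univ j), Finset.card_univ, Fintype.card_fin]
      norm_num
    · push_neg at hex
      have : (Bad.filter fun p => F p = c) = ∅ := by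
        rw [Finset.eq_empty_iff_forall_notMem]
        intro p hp
        rw [Finset.mem_filter] at hp
        obtain ⟨-, ⟨u, hu⟩⟩ := hfact p hp.1 c hp.2
        exact hu (hex u)
      rw [this, Finset.card_empty]
      exact Nat.zero_le _
  -- total count
  have hcount : Bad.card ≤ certFinset.card * B ^ (n - 1) := by
    rw [Finset.card_eq_sum_card_fiberwise hmem]
    calc ∑ c ∈ certFinset, (Bad.filter fun p => F p = c).card
        ≤ ∑ _c ∈ certFinset, B ^ (n - 1) := Finset.sum_le_sum hfiber
      _ = certFinset.card * B ^ (n - 1) := by rw [Finset.sum_const, smul_eq_mul]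
  -- cardinality of the certificate set
  have hcertcard : certFinset.card = (2 * K + 1).toNat ^ (m + 1) * (3 ^ m *
      (Nat.factorial n * 2 ^ n)) := by
    rw [hcert, Finset.card_product, Finset.card_product, Fintype.card_piFinset,
      Fintype.card_piFinset]
    have h1 : (Finset.Icc (-K) K).card = (2 * K + 1).toNat := by
      rw [Int.card_Icc]
      congr 1
      ring
    have h2 : (({-1, 0, 1} : Finset ℤ)).card = 3 := by decide
    simp only [h1, h2, Finset.prod_const, Finset.card_univ, Fintype.card_fin]
    rw [Fintype.card_prod, Fintype.card_perm, Fintype.card_fun,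
      Fintype.card_bool, Fintype.card_fin]
  -- put everything together over the reals
  rw [hcard]
  have htoNat : (((2 * K + 1).toNat : ℕ) : ℝ) = 2 * (K : ℝ) + 1 := by
    have : ((2 * K + 1).toNat : ℤ) = 2 * K + 1 := Int.toNat_of_nonneg (by linarith)
    exact_mod_cast this
  have hT : (Bad.card : ℝ) ≤ (3 * N) ^ (m + 1) * 3 ^ m * 2 ^ n *
      (Nat.factorial n : ℝ) * (B : ℝ) ^ (n - 1) := by
    calc (Bad.card : ℝ) ≤ ((certFinset.card * B ^ (n - 1) : ℕ) : ℝ) := by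
          exact_mod_cast hcount
      _ = ((2 * K + 1).toNat : ℝ) ^ (m + 1) * (3 ^ m * ((Nat.factorial n : ℝ) * 2 ^ n)) *
          (B : ℝ) ^ (n - 1) := by rw [hcertcard]; push_cast; ring
      _ ≤ (3 * N) ^ (m + 1) * (3 ^ m * ((Nat.factorial n : ℝ) * 2 ^ n)) *
          (B : ℝ) ^ (n - 1) := by
          have hb : ((2 * K + 1).toNat : ℝ) ≤ 3 * N := by
            rw [htoNat]
            linarith
          have hnn : (0 : ℝ) ≤ ((2 * K + 1).toNat : ℝ) := by positivity
          have := pow_le_pow_left₀ hnn hb (m + 1)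
          have hrest : (0 : ℝ) ≤ (3 ^ m * ((Nat.factorial n : ℝ) * 2 ^ n)) *
              (B : ℝ) ^ (n - 1) := by positivity
          nlinarith [this, hrest]
      _ = (3 * N) ^ (m + 1) * 3 ^ m * 2 ^ n * (Nat.factorial n : ℝ) * (B : ℝ) ^ (n - 1) := by
          ring
  have hBn : (B : ℝ) ^ n = (B : ℝ) ^ (n - 1) * B := by
    rw [← pow_succ]
    congr 1
    exact (Nat.succ_pred_eq_of_pos (lt_of_lt_of_le (by norm_num) hn)).symm
  rw [div_le_div_iff₀ (by positivity) hBpos]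
  calc (Bad.card : ℝ) * B
      ≤ ((3 * N) ^ (m + 1) * 3 ^ m * 2 ^ n * (Nat.factorial n : ℝ) * (B : ℝ) ^ (n - 1)) * B :=
        mul_le_mul_of_nonneg_right hT (le_of_lt hBpos)
    _ = (3 * N) ^ (m + 1) * 3 ^ m * 2 ^ n * (Nat.factorial n : ℝ) * (B : ℝ) ^ n := by
        rw [hBn]; ring
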